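/- Fix α ∈ (0,1), T > 0, and a continuous function θ : [0,T] → ℝ. Define v(t,x) = (x^α/α)·exp( (α/(2(1−α))) ∫_t^T θ(r)² dr ) for t ∈ [0,T] and x > 0. Then v satisfies the Hamilton–Jacobi–Bellman equation ∂v/∂t + sup_{π ∈ ℝ} [ (∂v/∂x)·π·θ(t) + (1/2)·(∂²v/∂x²)·π² ] = 0 on [0,T] × (0,∞), with terminal condition v(T,x) = x^α/α, and the supremum is attained at π̂(t,x) = x·θ(t)/(1−α). -/

import Mathlib

open Set

theorem stmt_19 (α T : ℝ) (hα : α ∈ Ioo (0:ℝ) 1) (hT : 0 < T)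
    (θ : ℝ → ℝ) (hθ : ContinuousOn θ (Icc 0 T))
    (E : ℝ → ℝ)
    (hE : ∀ t, E t = Real.exp (α/(2*(1-α)) * ∫ r in t..T, (θ r)^2))
    (v : ℝ → ℝ → ℝ) (hv : ∀ t x, v t x = x ^ α / α * E t) :
    (∀ x > (0:ℝ), v T x = x ^ α / α) ∧
    ∀ t ∈ Icc (0:ℝ) T, ∀ x > (0:ℝ),
      HasDerivWithinAt (fun s => v s x)
        (-(x ^ α / α * E t * (α/(2*(1-α))) * (θ t)^2)) (Icc 0 T) t ∧
      HasDerivAt (fun y : ℝ => v t y) (x ^ (α-1) * E t) x ∧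
      HasDerivAt (fun y : ℝ => y ^ (α-1) * E t) ((α-1) * x ^ (α-2) * E t) x ∧
      IsGreatest (Set.range fun π : ℝ =>
          (x ^ (α-1) * E t) * π * θ t + 1/2 * ((α-1) * x ^ (α-2) * E t) * π^2)
        ((x ^ (α-1) * E t) * (x * θ t/(1-α)) * θ t
          + 1/2 * ((α-1) * x ^ (α-2) * E t) * (x * θ t/(1-α))^2) ∧
      -(x ^ α / α * E t * (α/(2*(1-α))) * (θ t)^2)
        + ((x ^ (α-1) * E t) * (x * θ t/(1-α)) * θ t
          + 1/2 * ((α-1) * x ^ (α-2) * E t) * (x * θ t/(1-α))^2) = 0 := by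
  obtain ⟨hα0, hα1⟩ := hα
  have h1α : (0:ℝ) < 1 - α := by linarith
  have hθ2 : ContinuousOn (fun r => (θ r)^2) (Icc 0 T) := hθ.pow 2
  constructor
  · intro x hx
    rw [hv, hE]
    simp
  · intro t ht x hx
    have hEt : 0 < E t := by rw [hE]; exact Real.exp_pos _
    -- time derivative
    have hderivt : HasDerivWithinAt (fun s => v s x)
        (-(x ^ α / α * E t * (α/(2*(1-α))) * (θ t)^2)) (Icc 0 T) t := by
      haveI : Fact (t ∈ Icc (0:ℝ) T) := ⟨ht⟩
      have hint : IntervalIntegrable (fun r => (θ r)^2) MeasureTheory.volume t T := by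
        apply ContinuousOn.intervalIntegrable
        exact hθ2.mono (by rw [uIcc_of_le ht.2]; exact Icc_subset_Icc ht.1 le_rfl)
      have hI : HasDerivWithinAt (fun u => ∫ r in u..T, (θ r)^2) (-(θ t)^2)
          (Icc 0 T) t := by
        apply intervalIntegral.integral_hasDerivWithinAt_left hint
        · exact ⟨Icc 0 T, self_mem_nhdsWithin,
            (hθ2.aestronglyMeasurable measurableSet_Icc)⟩
        · exact hθ2 t ht
      have hExp : HasDerivWithinAt (fun u => Real.exp (α/(2*(1-α)) * ∫ r in u..T, (θ r)^2))
          (Real.exp (α/(2*(1-α)) * ∫ r in t..T, (θ r)^2) * (α/(2*(1-α)) * (-(θ t)^2)))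
          (Icc 0 T) t := (hI.const_mul (α/(2*(1-α)))).exp
      have : HasDerivWithinAt (fun s => x ^ α / α * E s)
          (x ^ α / α * (Real.exp (α/(2*(1-α)) * ∫ r in t..T, (θ r)^2) *
            (α/(2*(1-α)) * (-(θ t)^2)))) (Icc 0 T) t := by
        refine HasDerivWithinAt.const_mul _ (hExp.congr (fun s _ => ?_) ?_)
        · rw [hE]
        · rw [hE]
      have heq : x ^ α / α * (Real.exp (α/(2*(1-α)) * ∫ r in t..T, (θ r)^2) *
            (α/(2*(1-α)) * (-(θ t)^2))) =
          -(x ^ α / α * E t * (α/(2*(1-α))) * (θ t)^2) := by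
        rw [hE]; ring
      rw [heq] at this
      exact this.congr (fun s _ => hv s x) (hv t x)
    refine ⟨hderivt, ?_, ?_, ?_, ?_⟩
    · -- space derivative
      have h := (Real.hasDerivAt_rpow_const (x := x) (p := α) (Or.inl (ne_of_gt hx)))
      have := (h.div_const α).mul_const (E t)
      convert this using 2 with y
      · rfl
      · rfl
      · rw [hv]
      · rw [eq_div_iff (ne_of_gt hα0)]; ring
    · have h := (Real.hasDerivAt_rpow_const (x := x) (p := α - 1) (Or.inl (ne_of_gt hx)))
      have h2 := h.mul_const (E t)
      rw [show α - 1 - 1 = α - 2 by ring] at h2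
      exact h2
    · -- IsGreatest
      constructor
      · exact ⟨x * θ t/(1-α), rfl⟩
      · rintro y ⟨π, rfl⟩
        have hxp : (0:ℝ) < x ^ (α-2) := Real.rpow_pos_of_pos hx _
        have hB : (α-1) * x ^ (α-2) * E t < 0 := by
          have hneg : α - 1 < 0 := by linarith
          nlinarith [mul_pos hxp hEt]
        have hA : x ^ (α-1) * E t = -(((α-1) * x ^ (α-2) * E t) * x / (1-α)) := by
          have hx2 : x ^ (α-2) * x = x ^ (α-1) := by
            rw [← Real.rpow_add_one (ne_of_gt hx)]; ring_nf
          field_simp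
          rw [← hx2]
          ring
        have hsq : 0 ≤ (π - x * θ t/(1-α))^2 := sq_nonneg _
        simp only []
        rw [hA]
        set B := (α-1) * x ^ (α-2) * E t with hBdef
        have key : -(B * (x * θ t / (1-α))) * π + 1/2 * B * π^2 ≤
            -(B * (x * θ t / (1-α))) * (x * θ t / (1-α)) + 1/2 * B * (x * θ t / (1-α))^2 := by
          set w := x * θ t / (1-α)
          nlinarith [mul_nonpos_of_nonpos_of_nonneg hB.le (sq_nonneg (π - w))]
        calc -(B * x / (1-α)) * π * θ t + 1/2 * B * π^2
            = -(B * (x * θ t / (1-α))) * π + 1/2 * B * π^2 := by ring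
          _ ≤ -(B * (x * θ t / (1-α))) * (x * θ t / (1-α)) + 1/2 * B * (x * θ t / (1-α))^2 := key
          _ = -(B * x / (1-α)) * (x * θ t / (1-α)) * θ t + 1/2 * B * (x * θ t / (1-α))^2 := by
              ring
    · -- HJB identity
      have e1 : x ^ (α-1) = x ^ α / x := by
        rw [Real.rpow_sub hx, Real.rpow_one]
      have e2 : x ^ (α-2) = x ^ α / x^2 := by
        rw [Real.rpow_sub hx, show (2:ℝ) = ((2:ℕ):ℝ) by norm_num, Real.rpow_natCast]
      have h1 : (1-α) ≠ 0 := ne_of_gt h1α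
      have hαne : α ≠ 0 := ne_of_gt hα0
      rw [e1, e2]
      field_simp
      ring
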